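/- Consider a semidirect product G = N ⋊ S_n, where N is an abelian group on which the symmetric group S_n acts, and suppose one of the following conditions holds: n ≥ 5; or n = 4 and N does not contain an S_n-invariant subgroup isomorphic to ℤ/2 × ℤ/2; or n = 3 and N does not contain an S_n-invariant subgroup of order 3. If φ : N ⋊ S_n → Q is a group homomorphism with non-trivial kernel K, then either K ∩ S_n or K ∩ N is non-trivial (where N and S_n are identified with their canonical images in the semidirect product). -/
import Mathlib
open Equiv

private lemma aux_fresh {n : ℕ} (s : Finset (Fin n)) (h : s.card < n) : ∃ d : Fin n, d ∉ s := by
  by_contra h'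
  push_neg at h'
  have hsub : (Finset.univ : Finset (Fin n)) ⊆ s := fun x _ => h' x
  have := Finset.card_le_card hsub
  simp at this
  omega

private lemma aux_ne_perm {α : Type*} (f g : Equiv.Perm α) (x : α) (h : f x ≠ g x) :
    f ≠ g := fun e => h (by rw [e])

/-- Case A: if `σ a = b ≠ a` and `σ b ≠ a`, with at least 4 points, a noncommuting conjugate. -/
private lemma aux_caseA {n : ℕ} (hn : 4 ≤ n) (σ : Perm (Fin n)) (a : Fin n)
    (hab : σ a ≠ a) (hc : σ (σ a) ≠ a) :
    ∃ τ : Perm (Fin n), σ * (τ * σ * τ⁻¹) ≠ (τ * σ * τ⁻¹) * σ := by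
  set b := σ a with hb
  set c := σ b with hcdef
  have hba : b ≠ a := hab
  have hca : c ≠ a := hc
  have hcb : c ≠ b := by
    intro h
    exact hba (σ.injective (h.trans hb))
  obtain ⟨d, hd⟩ := aux_fresh {a, b, c} (by
    have h3 : ({a, b, c} : Finset (Fin n)).card ≤ 3 := by
      apply le_trans (Finset.card_insert_le _ _)
      have : ({b, c} : Finset (Fin n)).card ≤ 2 := by
        apply le_trans (Finset.card_insert_le _ _); simp
      omega
    omega)
  simp only [Finset.mem_insert, Finset.mem_singleton, not_or] at hd
  obtain ⟨hda, hdb, hdc⟩ := hd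
  refine ⟨swap c d, aux_ne_perm _ _ a ?_⟩
  have h1 : (swap c d * σ * (swap c d)⁻¹) a = b := by
    simp only [swap_inv, Perm.mul_apply]
    rw [swap_apply_of_ne_of_ne hca.symm (Ne.symm hda), ← hb,
      swap_apply_of_ne_of_ne hcb.symm (Ne.symm hdb)]
  have h2 : (swap c d * σ * (swap c d)⁻¹) b = d := by
    simp only [swap_inv, Perm.mul_apply]
    rw [swap_apply_of_ne_of_ne hcb.symm (Ne.symm hdb), ← hcdef, swap_apply_left]
  simp only [Perm.mul_apply, h1, h2, ← hb, ← hcdef]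
  exact fun h => hdc (h.symm)

/-- Main lemma: in `S_n`, `n ≥ 5`, every nontrivial element has a noncommuting conjugate. -/
private lemma aux_noncomm {n : ℕ} (hn : 5 ≤ n) (σ : Perm (Fin n)) (hσ : σ ≠ 1) :
    ∃ τ : Perm (Fin n), σ * (τ * σ * τ⁻¹) ≠ (τ * σ * τ⁻¹) * σ := by
  have h4 : 4 ≤ n := by omega
  obtain ⟨a, ha⟩ : ∃ a, σ a ≠ a := by
    by_contra h
    push_neg at h
    exact hσ (Equiv.ext h)
  by_cases hba : σ (σ a) ≠ a
  · exact aux_caseA h4 σ a ha hba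
  push_neg at hba
  set b := σ a with hb
  have hbne : b ≠ a := ha
  -- σ swaps a and b
  by_cases hfix : ∃ d, d ≠ a ∧ d ≠ b ∧ σ d = d
  · -- case B
    obtain ⟨d, hda, hdb, hd⟩ := hfix
    refine ⟨swap b d, aux_ne_perm _ _ a ?_⟩
    have h1 : (swap b d * σ * (swap b d)⁻¹) a = d := by
      simp only [swap_inv, Perm.mul_apply]
      rw [swap_apply_of_ne_of_ne (Ne.symm hbne) (Ne.symm hda), ← hb, swap_apply_left]
    have h2 : (swap b d * σ * (swap b d)⁻¹) b = b := by
      simp only [swap_inv, Perm.mul_apply]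
      rw [swap_apply_left, hd, swap_apply_right]
    simp only [Perm.mul_apply, h1, h2, hd, ← hb]
    exact fun h => hdb h
  -- every point outside {a,b} is moved
  push_neg at hfix
  obtain ⟨d, hd⟩ := aux_fresh {a, b} (by
    have : ({a, b} : Finset (Fin n)).card ≤ 2 := by
      apply le_trans (Finset.card_insert_le _ _); simp
    omega)
  simp only [Finset.mem_insert, Finset.mem_singleton, not_or] at hd
  obtain ⟨hda, hdb⟩ := hd
  have hdmove : σ d ≠ d := hfix d hda hdb
  by_cases hdd : σ (σ d) ≠ d
  · exact aux_caseA h4 σ d hdmove hdd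
  push_neg at hdd
  set e := σ d with he
  have hed : e ≠ d := hdmove
  have hea : e ≠ a := fun h => hdb (by rw [← hdd, h, ← hb])
  have heb : e ≠ b := fun h => hda (by rw [← hdd, h, hba])
  obtain ⟨f, hf⟩ := aux_fresh {a, b, d, e} (by
    have : ({a, b, d, e} : Finset (Fin n)).card ≤ 4 := by
      apply le_trans (Finset.card_insert_le _ _)
      have h2 : ({b, d, e} : Finset (Fin n)).card ≤ 3 := by
        apply le_trans (Finset.card_insert_le _ _)
        have h1 : ({d, e} : Finset (Fin n)).card ≤ 2 := by
          apply le_trans (Finset.card_insert_le _ _); simp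
        omega
      omega
    omega)
  simp only [Finset.mem_insert, Finset.mem_singleton, not_or] at hf
  obtain ⟨hfa, hfb, hfd, hfe⟩ := hf
  have hfmove : σ f ≠ f := hfix f hfa hfb
  by_cases hff : σ (σ f) ≠ f
  · exact aux_caseA h4 σ f hfmove hff
  push_neg at hff
  set g := σ f with hg
  have hgf : g ≠ f := hfmove
  have hga : g ≠ a := fun h => hfb (by rw [← hff, h, ← hb])
  have hgb : g ≠ b := fun h => hfa (by rw [← hff, h, hba])
  have hgd : g ≠ d := fun h => hfe (by rw [← hff, h, ← he])
  have hge : g ≠ e := fun h => hfd (by rw [← hff, h, hdd])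
  refine ⟨swap a d * swap d f, aux_ne_perm _ _ a ?_⟩
  have had : a ≠ d := Ne.symm hda
  have hinva : ((swap a d * swap d f)⁻¹ : Perm (Fin n)) a = f := by
    simp only [mul_inv_rev, swap_inv, Perm.mul_apply]
    rw [swap_apply_left, swap_apply_left]
  have hinvb : ((swap a d * swap d f)⁻¹ : Perm (Fin n)) b = b := by
    simp only [mul_inv_rev, swap_inv, Perm.mul_apply]
    rw [swap_apply_of_ne_of_ne hbne (Ne.symm hdb), swap_apply_of_ne_of_ne (Ne.symm hdb) (Ne.symm hfb)]
  have h1 : (swap a d * swap d f * σ * (swap a d * swap d f)⁻¹) a = g := by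
    simp only [Perm.mul_apply] at hinva ⊢
    rw [hinva, ← hg, swap_apply_of_ne_of_ne hgd hgf, swap_apply_of_ne_of_ne hga hgd]
  have h2 : (swap a d * swap d f * σ * (swap a d * swap d f)⁻¹) b = d := by
    simp only [Perm.mul_apply] at hinvb ⊢
    rw [hinvb, hba, swap_apply_of_ne_of_ne (Ne.symm hda) (Ne.symm hfa), swap_apply_left]
  simp only [Perm.mul_apply, h1, h2, ← hb, hff]
  exact fun h => hfd h

private lemma aux_F1_4 : ∀ σ : Perm (Fin 4), σ = 1 ∨ (σ^2 = 1 ∧ ∀ i, σ i ≠ i) ∨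
    ∃ τ : Perm (Fin 4), σ * (τ * σ * τ⁻¹) ≠ (τ * σ * τ⁻¹) * σ := by decide

private lemma aux_F2_4 : ∀ σ σ' : Perm (Fin 4), (σ ≠ 1 ∧ σ^2 = 1 ∧ ∀ i, σ i ≠ i) →
    (σ' ≠ 1 ∧ σ'^2 = 1 ∧ ∀ i, σ' i ≠ i) → ∃ τ : Perm (Fin 4), τ * σ * τ⁻¹ = σ' := by decide

private lemma aux_card_4 : Nat.card {σ : Perm (Fin 4) // σ = 1 ∨ (σ^2 = 1 ∧ ∀ i, σ i ≠ i)} = 4 := by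
  rw [Nat.card_eq_fintype_card]; decide

private lemma aux_F1_3 : ∀ σ : Perm (Fin 3), σ = 1 ∨ (∀ i, σ i ≠ i) ∨
    ∃ τ : Perm (Fin 3), σ * (τ * σ * τ⁻¹) ≠ (τ * σ * τ⁻¹) * σ := by decide

private lemma aux_F2_3 : ∀ σ σ' : Perm (Fin 3), (σ ≠ 1 ∧ ∀ i, σ i ≠ i) →
    (σ' ≠ 1 ∧ ∀ i, σ' i ≠ i) → ∃ τ : Perm (Fin 3), τ * σ * τ⁻¹ = σ' := by decide

private lemma aux_card_3 : Nat.card {σ : Perm (Fin 3) // σ = 1 ∨ (∀ i, σ i ≠ i)} = 3 := by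
  rw [Nat.card_eq_fintype_card]; decide

private instance aux_klein_target :
    IsKleinFour (Multiplicative (ZMod 2) × Multiplicative (ZMod 2)) := by
  constructor
  · rw [Nat.card_eq_fintype_card]; decide
  · have hdvd : Monoid.exponent (Multiplicative (ZMod 2) × Multiplicative (ZMod 2)) ∣ 2 := by
      apply Monoid.exponent_dvd_of_forall_pow_eq_one
      have : ∀ x : Multiplicative (ZMod 2) × Multiplicative (ZMod 2), x ^ 2 = 1 := by decide
      exact this
    have ho : orderOf ((Multiplicative.ofAdd (1 : ZMod 2), 1) :
        Multiplicative (ZMod 2) × Multiplicative (ZMod 2)) = 2 :=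
      orderOf_eq_prime (by decide) (by decide)
    have hd2 := Monoid.order_dvd_exponent
      ((Multiplicative.ofAdd (1 : ZMod 2), 1) :
        Multiplicative (ZMod 2) × Multiplicative (ZMod 2))
    rw [ho] at hd2
    exact Nat.dvd_antisymm hdvd hd2

/-- **Lemma 4.** Consider a semidirect product `N ⋊ S_n` where `N` is abelian, and suppose
one of the following holds: `n ≥ 5`; or `n = 4` and `N` has no `S_n`-invariant subgroup
isomorphic to `ℤ/2 × ℤ/2`; or `n = 3` and `N` has no `S_n`-invariant subgroup of order 3.
If `φ : N ⋊ S_n → Q` is a homomorphism with non-trivial kernel `K`, then either `K ∩ S_n`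
or `K ∩ N` is non-trivial. -/
theorem semidirect_kernel_meets_factor (n : ℕ) (N : Type*) [CommGroup N]
    (ψ : Equiv.Perm (Fin n) →* MulAut N)
    (hcond : 5 ≤ n ∨
      (n = 4 ∧ ¬ ∃ H : Subgroup N,
        (∀ σ : Equiv.Perm (Fin n), ∀ x ∈ H, ψ σ x ∈ H) ∧
        Nonempty (H ≃* Multiplicative (ZMod 2) × Multiplicative (ZMod 2))) ∨
      (n = 3 ∧ ¬ ∃ H : Subgroup N,
        (∀ σ : Equiv.Perm (Fin n), ∀ x ∈ H, ψ σ x ∈ H) ∧ Nat.card H = 3))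
    (Q : Type*) [Group Q]
    (φ : SemidirectProduct N (Equiv.Perm (Fin n)) ψ →* Q)
    (hK : φ.ker ≠ ⊥) :
    φ.ker ⊓ (SemidirectProduct.inr : Equiv.Perm (Fin n) →* _).range ≠ ⊥ ∨
    φ.ker ⊓ (SemidirectProduct.inl : N →* _).range ≠ ⊥ := by
  by_contra hcon
  push_neg at hcon
  obtain ⟨h1, h2⟩ := hcon
  set K := φ.ker with hKdef
  have hKnormal : K.Normal := MonoidHom.normal_ker φ
  have hN : ∀ g ∈ K, g.right = 1 → g = 1 := by
    intro g hg hr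
    have hmem : g ∈ K ⊓ (SemidirectProduct.inl : N →* _).range := by
      refine ⟨hg, ?_⟩
      rw [SemidirectProduct.range_inl_eq_ker_rightHom]
      exact hr
    rw [h2] at hmem
    exact Subgroup.mem_bot.mp hmem
  have hS : ∀ g ∈ K, g.left = 1 → g = 1 := by
    intro g hg hl
    have hmem : g ∈ K ⊓ (SemidirectProduct.inr : Equiv.Perm (Fin n) →* _).range :=
      ⟨hg, ⟨g.right, by ext <;> simp [hl.symm]⟩⟩
    rw [h1] at hmem
    exact Subgroup.mem_bot.mp hmem
  have hψ : ∀ g ∈ K, ∀ a : N, ψ g.right a = a := by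
    intro g hg a
    have hc1 : (SemidirectProduct.inl a) * g * (SemidirectProduct.inl a)⁻¹ * g⁻¹ ∈ K :=
      mul_mem (hKnormal.conj_mem g hg (SemidirectProduct.inl a)) (inv_mem hg)
    have hr : ((SemidirectProduct.inl a) * g * (SemidirectProduct.inl a)⁻¹ * g⁻¹).right = 1 := by
      simp
    have hone := hN _ hc1 hr
    have h' : (SemidirectProduct.inl a) * g * (SemidirectProduct.inl a)⁻¹ = g := by
      have := mul_eq_one_iff_eq_inv.mp hone
      simpa using this
    have hcomm : (SemidirectProduct.inl a) * g = g * (SemidirectProduct.inl a) := by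
      calc SemidirectProduct.inl a * g
          = (SemidirectProduct.inl a * g * (SemidirectProduct.inl a)⁻¹) *
            SemidirectProduct.inl a := by group
        _ = g * SemidirectProduct.inl a := by rw [h']
    have hl := congrArg SemidirectProduct.left hcomm
    simp only [SemidirectProduct.mul_left, SemidirectProduct.left_inl,
      SemidirectProduct.right_inl, map_one, MulAut.one_apply] at hl
    have h3 : g.left * ψ g.right a = g.left * a := by rw [← hl, mul_comm]
    exact mul_left_cancel h3
  have hinvleft : ∀ g ∈ K, (g⁻¹).left = g.left⁻¹ := by
    intro g hg
    rw [SemidirectProduct.inv_left]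
    exact hψ g⁻¹ (inv_mem hg) g.left⁻¹
  have hmulleft : ∀ g ∈ K, ∀ x : SemidirectProduct N (Equiv.Perm (Fin n)) ψ,
      (g * x).left = g.left * x.left := by
    intro g hg x
    rw [SemidirectProduct.mul_left, hψ g hg]
  have hrinj : ∀ g ∈ K, ∀ g' ∈ K, g.right = g'.right → g = g' := by
    intro g hg g' hg' h
    have hm : g⁻¹ * g' ∈ K := mul_mem (inv_mem hg) hg'
    have hr : (g⁻¹ * g').right = 1 := by
      simp [h]
    exact inv_mul_eq_one.mp (hN _ hm hr)
  have hlinj : ∀ g ∈ K, ∀ g' ∈ K, g.left = g'.left → g = g' := by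
    intro g hg g' hg' h
    have hm : g⁻¹ * g' ∈ K := mul_mem (inv_mem hg) hg'
    have hl : (g⁻¹ * g').left = 1 := by
      rw [hmulleft g⁻¹ (inv_mem hg), hinvleft g hg, h, inv_mul_cancel]
    exact inv_mul_eq_one.mp (hS _ hm hl)
  have hKab : ∀ g ∈ K, ∀ g' ∈ K, g * g' = g' * g := by
    intro g hg g' hg'
    have hm : (g * g') * (g' * g)⁻¹ ∈ K :=
      mul_mem (mul_mem hg hg') (inv_mem (mul_mem hg' hg))
    have hl : ((g * g') * (g' * g)⁻¹).left = 1 := by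
      rw [hmulleft _ (mul_mem hg hg'), hinvleft _ (mul_mem hg' hg),
        hmulleft g hg, hmulleft g' hg', mul_comm g.left g'.left, mul_inv_cancel]
    exact mul_inv_eq_one.mp (hS _ hm hl)
  obtain ⟨g₀, hg₀K, hg₀⟩ : ∃ g, g ∈ K ∧ g ≠ 1 := by
    by_contra h
    push_neg at h
    exact hK ((Subgroup.eq_bot_iff_forall _).mpr h)
  have hσ₀ : g₀.right ≠ 1 := fun h => hg₀ (hN _ hg₀K h)
  have hconj : ∀ g ∈ K, ∀ τ : Equiv.Perm (Fin n),
      ∃ g' ∈ K, g'.right = τ * g.right * τ⁻¹ ∧ g'.left = ψ τ g.left := by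
    intro g hg τ
    refine ⟨SemidirectProduct.inr τ * g * (SemidirectProduct.inr τ)⁻¹,
      hKnormal.conj_mem g hg (SemidirectProduct.inr τ), by simp, ?_⟩
    rw [← map_inv]
    simp [SemidirectProduct.mul_left]
  have hHcomm : ∀ g ∈ K, ∀ g' ∈ K, g.right * g'.right = g'.right * g.right := by
    intro g hg g' hg'
    have := congrArg SemidirectProduct.right (hKab g hg g' hg')
    simpa using this
  have hnc : ∀ τ : Equiv.Perm (Fin n),
      g₀.right * (τ * g₀.right * τ⁻¹) = (τ * g₀.right * τ⁻¹) * g₀.right := by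
    intro τ
    obtain ⟨g', hg', hr, _⟩ := hconj g₀ hg₀K τ
    rw [← hr]
    exact hHcomm g₀ hg₀K g' hg'
  let H' : Subgroup N :=
    { carrier := {a | ∃ g ∈ K, g.left = a}
      one_mem' := ⟨1, one_mem K, rfl⟩
      mul_mem' := by
        rintro a b ⟨g, hg, rfl⟩ ⟨g', hg', rfl⟩
        exact ⟨g * g', mul_mem hg hg', hmulleft g hg g'⟩
      inv_mem' := by
        rintro a ⟨g, hg, rfl⟩
        exact ⟨g⁻¹, inv_mem hg, hinvleft g hg⟩ }
  have hH'mem : ∀ a : N, a ∈ H' ↔ ∃ g ∈ K, g.left = a := fun a => Iff.rfl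
  have hH'inv : ∀ σ : Equiv.Perm (Fin n), ∀ x ∈ H', ψ σ x ∈ H' := by
    intro σ x hx
    obtain ⟨g, hg, rfl⟩ := (hH'mem x).mp hx
    obtain ⟨g', hg', _, hl⟩ := hconj g hg σ
    exact (hH'mem _).mpr ⟨g', hg', hl⟩
  have b1 : Function.Bijective
      (fun g : K => (⟨g.1.left, ⟨g.1, g.2, rfl⟩⟩ : H')) := by
    constructor
    · rintro ⟨g, hg⟩ ⟨g', hg'⟩ h
      exact Subtype.ext (hlinj g hg g' hg' (congrArg Subtype.val h))
    · rintro ⟨a, ha⟩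
      obtain ⟨g, hg, rfl⟩ := (hH'mem a).mp ha
      exact ⟨⟨g, hg⟩, rfl⟩
  have b2 : Function.Bijective
      (fun g : K => (⟨g.1.right, ⟨g.1, g.2, rfl⟩⟩ :
        {σ : Equiv.Perm (Fin n) // ∃ g ∈ K, g.right = σ})) := by
    constructor
    · rintro ⟨g, hg⟩ ⟨g', hg'⟩ h
      exact Subtype.ext (hrinj g hg g' hg' (congrArg Subtype.val h))
    · rintro ⟨σ, g, hg, rfl⟩
      exact ⟨⟨g, hg⟩, rfl⟩
  have hcard : Nat.card H' =
      Nat.card {σ : Equiv.Perm (Fin n) // ∃ g ∈ K, g.right = σ} :=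
    (Nat.card_eq_of_bijective _ b1).symm.trans (Nat.card_eq_of_bijective _ b2)
  rcases hcond with h5 | ⟨h4, hno⟩ | ⟨h3, hno⟩
  · obtain ⟨τ, hτ⟩ := aux_noncomm h5 g₀.right hσ₀
    exact hτ (hnc τ)
  · subst h4
    have hV : ∀ g ∈ K, g.right = 1 ∨ (g.right^2 = 1 ∧ ∀ i, g.right i ≠ i) := by
      intro g hg
      rcases aux_F1_4 g.right with h | h | ⟨τ, hτ⟩
      · exact Or.inl h
      · exact Or.inr h
      · exfalso
        apply hτ
        obtain ⟨g', hg', hr, _⟩ := hconj g hg τ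
        rw [← hr]
        exact hHcomm g hg g' hg'
    have hg₀V : g₀.right ≠ 1 ∧ g₀.right^2 = 1 ∧ ∀ i, g₀.right i ≠ i := by
      rcases hV g₀ hg₀K with h | h
      · exact absurd h hσ₀
      · exact ⟨hσ₀, h.1, h.2⟩
    have hmemiff : ∀ σ : Perm (Fin 4),
        (∃ g ∈ K, g.right = σ) ↔ (σ = 1 ∨ (σ^2 = 1 ∧ ∀ i, σ i ≠ i)) := by
      intro σ
      constructor
      · rintro ⟨g, hg, rfl⟩
        exact hV g hg
      · rintro (rfl | hσ)
        · exact ⟨1, one_mem K, rfl⟩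
        · have hσne : σ ≠ 1 := fun h => (hσ.2 0) (by rw [h]; rfl)
          obtain ⟨τ, hτ⟩ := aux_F2_4 g₀.right σ hg₀V ⟨hσne, hσ⟩
          obtain ⟨g', hg', hr, _⟩ := hconj g₀ hg₀K τ
          exact ⟨g', hg', hr.trans hτ⟩
    have hcard4 : Nat.card H' = 4 := by
      rw [hcard, Nat.card_congr (Equiv.subtypeEquivRight hmemiff)]
      exact aux_card_4
    have hsq : ∀ x : H', x * x = 1 := by
      rintro ⟨a, ha⟩
      obtain ⟨g, hg, rfl⟩ := (hH'mem a).mp ha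
      have hr2 : (g * g).right = 1 := by
        rcases hV g hg with h | h
        · simp [h]
        · rw [SemidirectProduct.mul_right, ← pow_two]
          exact h.1
      have hone := hN _ (mul_mem hg hg) hr2
      have hleft := congrArg SemidirectProduct.left hone
      rw [hmulleft g hg] at hleft
      exact Subtype.ext (by simpa using hleft)
    haveI : IsKleinFour H' := by
      constructor
      · exact hcard4
      · have hdvd : Monoid.exponent H' ∣ 2 :=
          Monoid.exponent_dvd_of_forall_pow_eq_one (fun x => by rw [pow_two]; exact hsq x)
        have ha₀ : g₀.left ≠ 1 := fun h => hg₀ (hS _ hg₀K h)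
        have hx₀ : (⟨g₀.left, (hH'mem _).mpr ⟨g₀, hg₀K, rfl⟩⟩ : H') ≠ 1 :=
          fun h => ha₀ (congrArg Subtype.val h)
        have ho : orderOf (⟨g₀.left, (hH'mem _).mpr ⟨g₀, hg₀K, rfl⟩⟩ : H') = 2 :=
          orderOf_eq_prime (by rw [pow_two]; exact hsq _) hx₀
        exact Nat.dvd_antisymm hdvd (ho ▸ Monoid.order_dvd_exponent _)
    exact hno ⟨H', hH'inv, IsKleinFour.nonempty_mulEquiv⟩
  · subst h3
    have hV : ∀ g ∈ K, g.right = 1 ∨ (∀ i, g.right i ≠ i) := by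
      intro g hg
      rcases aux_F1_3 g.right with h | h | ⟨τ, hτ⟩
      · exact Or.inl h
      · exact Or.inr h
      · exfalso
        apply hτ
        obtain ⟨g', hg', hr, _⟩ := hconj g hg τ
        rw [← hr]
        exact hHcomm g hg g' hg'
    have hg₀V : g₀.right ≠ 1 ∧ ∀ i, g₀.right i ≠ i := by
      rcases hV g₀ hg₀K with h | h
      · exact absurd h hσ₀
      · exact ⟨hσ₀, h⟩
    have hmemiff : ∀ σ : Perm (Fin 3),
        (∃ g ∈ K, g.right = σ) ↔ (σ = 1 ∨ ∀ i, σ i ≠ i) := by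
      intro σ
      constructor
      · rintro ⟨g, hg, rfl⟩
        exact hV g hg
      · rintro (rfl | hσ)
        · exact ⟨1, one_mem K, rfl⟩
        · have hσne : σ ≠ 1 := fun h => (hσ 0) (by rw [h]; rfl)
          obtain ⟨τ, hτ⟩ := aux_F2_3 g₀.right σ hg₀V ⟨hσne, hσ⟩
          obtain ⟨g', hg', hr, _⟩ := hconj g₀ hg₀K τ
          exact ⟨g', hg', hr.trans hτ⟩
    have hcard3 : Nat.card H' = 3 := by
      rw [hcard, Nat.card_congr (Equiv.subtypeEquivRight hmemiff)]
      exact aux_card_3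
    exact hno ⟨H', hH'inv, hcard3⟩
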